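/- For every integer d ≥ 3, the integral R^hydro_d satisfies R^hydro_d ≤ 4/d. -/

import Mathlib

open Real MeasureTheory Set
open scoped ENNReal

noncomputable def nu : Measure ℝ := volume.restrict (Icc 0 1)

noncomputable def muP (n : ℕ) : Measure (Fin n → ℝ) := Measure.pi fun _ => nu

lemma nu_univ : nu univ = 1 := by
  simp [nu, Real.volume_Icc]

instance : IsProbabilityMeasure nu := ⟨nu_univ⟩

lemma cube_restrict (n : ℕ) :
    volume.restrict (Set.univ.pi fun _ : Fin n => Icc (0:ℝ) 1) = muP n := by
  rw [muP]
  refine (Measure.pi_eq fun s hs => ?_).symm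
  rw [Measure.restrict_apply (MeasurableSet.univ_pi hs)]
  rw [← Set.pi_inter_distrib, volume_pi, Measure.pi_pi]
  simp only [nu, Measure.restrict_apply (hs _)]
lemma map_pi {d : ℕ} (g : Fin 3 → Fin d) (hg : Function.Injective g) :
    (muP d).map (fun x j => x (g j)) = muP 3 := by
  have hmeas : Measurable fun (x : Fin d → ℝ) (j : Fin 3) => x (g j) :=
    measurable_pi_lambda _ fun j => measurable_pi_apply _
  rw [muP]
  refine (Measure.pi_eq fun s hs => ?_).symm
  rw [Measure.map_apply hmeas (MeasurableSet.univ_pi hs)]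
  have hpre : (fun (x : Fin d → ℝ) j => x (g j)) ⁻¹' (Set.univ.pi s)
      = Set.univ.pi (fun i => ⋂ j, ⋂ (_ : g j = i), s j) := by
    ext x
    simp only [Set.mem_preimage, Set.mem_univ_pi, Set.mem_iInter]
    constructor
    · rintro h i j rfl; exact h j
    · intro h j; exact h (g j) j rfl
  rw [hpre, Measure.pi_pi]
  have h1 : ∀ i ∈ Finset.univ, i ∉ Finset.univ.image g →
      nu (⋂ j, ⋂ (_ : g j = i), s j) = 1 := by
    intro i _ hi
    have : (⋂ j, ⋂ (_ : g j = i), s j) = univ := by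
      refine Set.eq_univ_of_forall fun x => ?_
      simp only [Set.mem_iInter]
      intro j hj
      exact absurd (Finset.mem_image.mpr ⟨j, Finset.mem_univ j, hj⟩) hi
    rw [this, nu_univ]
  rw [← Finset.prod_subset (Finset.subset_univ (Finset.univ.image g)) h1,
    Finset.prod_image (fun a _ b _ h => hg h)]
  refine Finset.prod_congr rfl fun j _ => ?_
  congr 1
  ext x
  simp only [Set.mem_iInter]
  constructor
  · intro h; exact h j rfl
  · intro hx j' hj'; cases hg hj'; exact hx
lemma real_amhm {ι : Type*} (s : Finset ι) (r : ι → ℝ) (hr : ∀ i ∈ s, 0 < r i)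
    (hs : s.Nonempty) : (s.card : ℝ)^2 * (∑ i ∈ s, r i)⁻¹ ≤ ∑ i ∈ s, (r i)⁻¹ := by
  have hsum : 0 < ∑ i ∈ s, r i := Finset.sum_pos hr hs
  have cs := Finset.sum_mul_sq_le_sq_mul_sq s (fun i => Real.sqrt (r i))
    (fun i => Real.sqrt ((r i)⁻¹))
  have h1 : ∑ i ∈ s, Real.sqrt (r i) * Real.sqrt ((r i)⁻¹) = (s.card : ℝ) := by
    rw [Finset.card_eq_sum_ones s]
    push_cast
    refine Finset.sum_congr rfl fun i hi => ?_
    rw [Real.sqrt_inv, mul_inv_cancel₀ (Real.sqrt_ne_zero'.mpr (hr i hi))]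
  have h2 : ∀ i ∈ s, Real.sqrt (r i) ^ 2 = r i := fun i hi => Real.sq_sqrt (hr i hi).le
  have h3 : ∀ i ∈ s, Real.sqrt ((r i)⁻¹) ^ 2 = (r i)⁻¹ := fun i hi =>
    Real.sq_sqrt (inv_nonneg.mpr (hr i hi).le)
  rw [h1, Finset.sum_congr rfl h2, Finset.sum_congr rfl h3] at cs
  rw [mul_comm, ← div_eq_inv_mul, div_le_iff₀ hsum]
  linarith [cs]

lemma amhm {ι : Type*} (s : Finset ι) (b : ι → ℝ≥0∞) (hb : ∀ i ∈ s, b i ≠ ⊤) :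
    (s.card : ℝ≥0∞)^2 * (∑ i ∈ s, b i)⁻¹ ≤ ∑ i ∈ s, (b i)⁻¹ := by
  by_cases hz : ∃ i ∈ s, b i = 0
  · obtain ⟨i, his, hi⟩ := hz
    refine le_trans le_top ?_
    have : (b i)⁻¹ = ⊤ := by simp [hi]
    calc (⊤ : ℝ≥0∞) = (b i)⁻¹ := this.symm
      _ ≤ ∑ i ∈ s, (b i)⁻¹ := Finset.single_le_sum (f := fun i => (b i)⁻¹) (fun j _ => zero_le) his
  · push_neg at hz
    rcases s.eq_empty_or_nonempty with rfl | hs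
    · simp
    set r := fun i => (b i).toReal with hr
    have hrpos : ∀ i ∈ s, 0 < r i := fun i hi =>
      ENNReal.toReal_pos (hz i hi) (hb i hi)
    have hbr : ∀ i ∈ s, b i = ENNReal.ofReal (r i) := fun i hi =>
      (ENNReal.ofReal_toReal (hb i hi)).symm
    have hsum : ∑ i ∈ s, b i = ENNReal.ofReal (∑ i ∈ s, r i) := by
      rw [ENNReal.ofReal_sum_of_nonneg (fun i hi => (hrpos i hi).le)]
      exact Finset.sum_congr rfl hbr
    have hsuminv : ∑ i ∈ s, (b i)⁻¹ = ENNReal.ofReal (∑ i ∈ s, (r i)⁻¹) := by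
      rw [ENNReal.ofReal_sum_of_nonneg (fun i hi => inv_nonneg.mpr (hrpos i hi).le)]
      refine Finset.sum_congr rfl fun i hi => ?_
      rw [hbr i hi, ← ENNReal.ofReal_inv_of_pos (hrpos i hi)]
    have hsumpos : 0 < ∑ i ∈ s, r i := Finset.sum_pos hrpos hs
    rw [hsum, hsuminv, ← ENNReal.ofReal_inv_of_pos hsumpos]
    have hcard : (s.card : ℝ≥0∞)^2 = ENNReal.ofReal ((s.card : ℝ)^2) := by
      rw [ENNReal.ofReal_pow (by positivity), ENNReal.ofReal_natCast]
    rw [hcard, ← ENNReal.ofReal_mul (by positivity)]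
    exact ENNReal.ofReal_le_ofReal (real_amhm s r hrpos hs)

lemma jordan {t : ℝ} (h0 : 0 ≤ t) (h1 : t ≤ 1) :
    16 * (min t (1-t))^2 ≤ 2 - 2*Real.cos (2*π*t) := by
  have key : ∀ x : ℝ, 0 ≤ x → x ≤ 1/2 → 2*x ≤ Real.sin (π*x) := by
    intro x hx hx'
    have := Real.mul_le_sin (x := π*x) (by positivity)
      (by nlinarith [Real.pi_pos])
    calc 2*x = 2/π * (π*x) := by field_simp
      _ ≤ Real.sin (π*x) := this
  have hrw : 2 - 2*Real.cos (2*π*t) = 4 * Real.sin (π*t)^2 := by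
    have : (2:ℝ)*π*t = 2*(π*t) := by ring
    rw [this, Real.cos_two_mul, Real.sin_sq]
    ring
  rw [hrw]
  have hsin : 2 * min t (1-t) ≤ Real.sin (π*t) := by
    rcases le_total t (1/2) with h | h
    · rw [min_eq_left (by linarith)]
      exact key t h0 h
    · rw [min_eq_right (by linarith)]
      have : Real.sin (π*t) = Real.sin (π*(1-t)) := by
        rw [show π*(1-t) = π - π*t by ring, Real.sin_pi_sub]
      rw [this]
      exact key (1-t) (by linarith) (by linarith)
  have hm : 0 ≤ min t (1-t) := le_min h0 (by linarith)
  nlinarith [hsin, hm]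
instance muP_prob (n : ℕ) : IsProbabilityMeasure (muP n) := by
  constructor
  rw [muP, Measure.pi_univ]
  simp [nu_univ]

lemma ae_coord_mem : ∀ᵐ y ∂(muP 3), ∀ j, y j ∈ Icc (0:ℝ) 1 := by
  rw [← cube_restrict 3]
  filter_upwards [ae_restrict_mem (MeasurableSet.univ_pi fun _ => measurableSet_Icc)] with y hy
  exact fun j => hy j (Set.mem_univ j)

lemma ae_coord_ne : ∀ᵐ y ∂(muP 3), y 0 ≠ 0 ∧ y 0 ≠ 1 := by
  have hnull : muP 3 {y : Fin 3 → ℝ | y 0 = 0 ∨ y 0 = 1} = 0 := by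
    have hsub : {y : Fin 3 → ℝ | y 0 = 0 ∨ y 0 = 1}
        = Set.univ.pi (fun i : Fin 3 => if i = 0 then ({0, 1} : Set ℝ) else Set.univ) := by
      ext y
      simp only [Set.mem_setOf_eq, Set.mem_univ_pi]
      constructor
      · intro h i
        by_cases hi : i = 0 <;> simp [hi, h]
      · intro h
        have := h 0
        simpa using this
    rw [hsub, muP, Measure.pi_pi]
    have h01 : nu ({0, 1} : Set ℝ) = 0 := by
      refine le_antisymm ?_ zero_le
      calc nu ({0,1} : Set ℝ) ≤ volume ({0,1} : Set ℝ) := Measure.restrict_le_self _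
        _ = 0 := (Set.to_countable _).measure_zero volume
    rw [Finset.prod_eq_zero (Finset.mem_univ (0 : Fin 3))]
    simp [h01]
  refine ae_iff.mpr (measure_mono_null ?_ hnull)
  intro y hy
  simp only [Set.mem_setOf_eq, not_and_or, not_not] at hy ⊢
  exact hy

lemma key3 :
    ∫⁻ y, (∑ j : Fin 3, ENNReal.ofReal (2 - 2*Real.cos (2*π*(y j))))⁻¹ ∂(muP 3)
      ≤ ENNReal.ofReal (3/4) := by
  set h : (Fin 3 → ℝ) → ℝ := fun y => (16 * ∑ j, (min (y j) (1 - y j))^2)⁻¹ with hh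
  have hmeas : Measurable h := by
    apply Measurable.inv
    apply Measurable.const_mul
    exact Finset.measurable_sum _ fun j _ =>
      (((measurable_pi_apply j).min (measurable_const.sub (measurable_pi_apply j))).pow_const 2)
  have step1 : ∫⁻ y, (∑ j : Fin 3, ENNReal.ofReal (2 - 2*Real.cos (2*π*(y j))))⁻¹ ∂(muP 3)
      ≤ ∫⁻ y, ENNReal.ofReal (h y) ∂(muP 3) := by
    refine lintegral_mono_ae ?_
    filter_upwards [ae_coord_mem, ae_coord_ne] with y hy hy0
    set S := ∑ j : Fin 3, (min (y j) (1 - y j))^2 with hS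
    have hm0 : 0 < min (y 0) (1 - y 0) := by
      rcases hy 0 with ⟨h0, h1⟩
      rcases hy0 with ⟨hne0, hne1⟩
      refine lt_min (lt_of_le_of_ne h0 (Ne.symm hne0)) ?_
      rcases lt_or_eq_of_le h1 with hlt | heq
      · linarith
      · exact absurd heq hne1
    have hSpos : 0 < S :=
      Finset.sum_pos' (fun j _ => sq_nonneg _) ⟨0, Finset.mem_univ _, by positivity⟩
    have hsum_ge : ENNReal.ofReal (16 * S)
        ≤ ∑ j : Fin 3, ENNReal.ofReal (2 - 2*Real.cos (2*π*(y j))) := by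
      have h16 : (16 : ℝ) * S = ∑ j : Fin 3, 16 * (min (y j) (1 - y j))^2 := by
        rw [Finset.mul_sum]
      rw [h16, ENNReal.ofReal_sum_of_nonneg (fun j _ => by positivity)]
      exact Finset.sum_le_sum fun j _ =>
        ENNReal.ofReal_le_ofReal (jordan (hy j).1 (hy j).2)
    calc (∑ j : Fin 3, ENNReal.ofReal (2 - 2*Real.cos (2*π*(y j))))⁻¹
        ≤ (ENNReal.ofReal (16 * S))⁻¹ := ENNReal.inv_le_inv' hsum_ge
      _ = ENNReal.ofReal ((16 * S)⁻¹) := by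
          rw [ENNReal.ofReal_inv_of_pos (by positivity)]
      _ = ENNReal.ofReal (h y) := rfl
  refine step1.trans ?_
  rw [lintegral_eq_lintegral_meas_lt (muP 3) (ae_of_all _ fun y => by positivity)
    hmeas.aemeasurable]
  have hsplit : Set.Ioi (0:ℝ) = Set.Ioc 0 (1/4) ∪ Set.Ioi (1/4) :=
    (Set.Ioc_union_Ioi_eq_Ioi (by norm_num)).symm
  rw [hsplit, lintegral_union measurableSet_Ioi (Set.Ioc_disjoint_Ioi le_rfl)]
  have piece1 : ∫⁻ t in Set.Ioc (0:ℝ) (1/4), muP 3 {y | t < h y} ≤ ENNReal.ofReal (1/4) := by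
    calc ∫⁻ t in Set.Ioc (0:ℝ) (1/4), muP 3 {y | t < h y}
        ≤ ∫⁻ _ in Set.Ioc (0:ℝ) (1/4), 1 := lintegral_mono fun t => prob_le_one
      _ = volume (Set.Ioc (0:ℝ) (1/4)) := setLIntegral_one _
      _ = ENNReal.ofReal (1/4) := by rw [Real.volume_Ioc]; norm_num
  have piece2 : ∫⁻ t in Set.Ioi (1/4:ℝ), muP 3 {y | t < h y} ≤ ENNReal.ofReal (1/2) := by
    have hbound : ∀ t ∈ Set.Ioi (1/4:ℝ), muP 3 {y | t < h y}
        ≤ ENNReal.ofReal (8⁻¹ * t ^ (-(3:ℝ)/2)) := by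
      intro t ht
      have ht' : (0:ℝ) < t := lt_trans (by norm_num) ht
      set s : ℝ := (4 * Real.sqrt t)⁻¹ with hs
      have hrpos : 0 < Real.sqrt t := Real.sqrt_pos.mpr ht'
      have hspos : 0 < s := by positivity
      have hsub : {y : Fin 3 → ℝ | t < h y}
          ⊆ Set.univ.pi (fun _ : Fin 3 => {u : ℝ | min u (1-u) < s}) := by
        intro y hy
        simp only [Set.mem_setOf_eq] at hy
        set S := ∑ j : Fin 3, (min (y j) (1 - y j))^2 with hS
        have hSnn : 0 ≤ S := Finset.sum_nonneg fun j _ => sq_nonneg _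
        have hhy : t < (16 * S)⁻¹ := hy
        have hSpos : 0 < S := by
          rcases lt_or_eq_of_le hSnn with hlt | heq
          · exact hlt
          · exfalso
            rw [← heq] at hhy
            norm_num at hhy
            linarith
        have hkey : S < (16 * t)⁻¹ := by
          have h16 : (0:ℝ) < 16 * S := by positivity
          nlinarith [mul_inv_cancel₀ (ne_of_gt h16),
            mul_inv_cancel₀ (show (16*t:ℝ) ≠ 0 by positivity), mul_pos ht' h16]
        intro j _
        simp only [Set.mem_setOf_eq]
        by_contra hcon
        push_neg at hcon
        have hsq : s^2 ≤ (min (y j) (1 - y j))^2 := pow_le_pow_left₀ hspos.le hcon 2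
        have hterm : (min (y j) (1 - y j))^2 ≤ S :=
          Finset.single_le_sum (f := fun j => (min (y j) (1 - y j))^2)
            (fun j _ => sq_nonneg _) (Finset.mem_univ j)
        have hs2 : s^2 = (16*t)⁻¹ := by
          rw [hs, mul_inv, mul_pow, inv_pow, inv_pow, Real.sq_sqrt ht'.le, mul_inv]
          norm_num
        linarith
      have hnuE : nu {u : ℝ | min u (1-u) < s} ≤ ENNReal.ofReal (2*s) := by
        rw [nu, Measure.restrict_apply' measurableSet_Icc]
        have hsub2 : {u : ℝ | min u (1-u) < s} ∩ Icc 0 1 ⊆ Icc 0 s ∪ Icc (1-s) 1 := by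
          rintro u ⟨hu, hu0, hu1⟩
          simp only [Set.mem_setOf_eq] at hu
          rcases min_lt_iff.mp hu with hc | hc
          · exact Or.inl ⟨hu0, hc.le⟩
          · exact Or.inr ⟨by linarith, hu1⟩
        calc volume ({u : ℝ | min u (1-u) < s} ∩ Icc 0 1)
            ≤ volume (Icc (0:ℝ) s ∪ Icc (1-s) 1) := measure_mono hsub2
          _ ≤ volume (Icc (0:ℝ) s) + volume (Icc (1-s) 1) := measure_union_le _ _
          _ = ENNReal.ofReal s + ENNReal.ofReal s := by
              rw [Real.volume_Icc, Real.volume_Icc]; norm_num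
          _ = ENNReal.ofReal (2*s) := by
              rw [← ENNReal.ofReal_add hspos.le hspos.le]; ring_nf
      have hpi : muP 3 (Set.univ.pi fun _ : Fin 3 => {u : ℝ | min u (1-u) < s})
          = ∏ _j : Fin 3, nu {u : ℝ | min u (1-u) < s} := Measure.pi_pi _ _
      calc muP 3 {y | t < h y}
          ≤ muP 3 (Set.univ.pi fun _ : Fin 3 => {u : ℝ | min u (1-u) < s}) :=
            measure_mono hsub
        _ = nu {u : ℝ | min u (1-u) < s} ^ 3 := by
            rw [hpi, Finset.prod_const, Finset.card_univ, Fintype.card_fin]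
        _ ≤ ENNReal.ofReal (2*s) ^ 3 := pow_le_pow_left₀ zero_le hnuE 3
        _ = ENNReal.ofReal ((2*s)^3) := (ENNReal.ofReal_pow (by positivity) 3).symm
        _ = ENNReal.ofReal (8⁻¹ * t ^ (-(3:ℝ)/2)) := by
            congr 1
            have hsq3 : Real.sqrt t ^ 3 = t ^ ((3:ℝ)/2) := by
              rw [Real.sqrt_eq_rpow, ← Real.rpow_natCast (t ^ ((1:ℝ)/2)) 3,
                ← Real.rpow_mul ht'.le]
              norm_num
            rw [show -(3:ℝ)/2 = -((3:ℝ)/2) by norm_num, Real.rpow_neg ht'.le, ← hsq3, hs]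
            field_simp
            ring
    have hmeas2 : Measurable fun t : ℝ => ENNReal.ofReal (8⁻¹ * t ^ (-(3:ℝ)/2)) :=
      by fun_prop
    calc ∫⁻ t in Set.Ioi (1/4:ℝ), muP 3 {y | t < h y}
        ≤ ∫⁻ t in Set.Ioi (1/4:ℝ), ENNReal.ofReal (8⁻¹ * t ^ (-(3:ℝ)/2)) :=
          setLIntegral_mono hmeas2 hbound
      _ = ENNReal.ofReal (1/2) := by
          have hint : IntegrableOn (fun t : ℝ => 8⁻¹ * t ^ (-(3:ℝ)/2)) (Set.Ioi (1/4:ℝ)) :=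
            (integrableOn_Ioi_rpow_of_lt (by norm_num) (by norm_num)).const_mul _
          rw [← ofReal_integral_eq_lintegral_ofReal hint
            ((ae_restrict_iff' measurableSet_Ioi).mpr (ae_of_all _ fun t ht =>
              mul_nonneg (by norm_num)
                (Real.rpow_nonneg (le_of_lt (lt_trans (by norm_num) ht)) _)))]
          congr 1
          rw [MeasureTheory.integral_const_mul,
            integral_Ioi_rpow_of_lt (by norm_num) (by norm_num)]
          have h14 : ((1:ℝ)/4) ^ (-(3:ℝ)/2 + 1) = 2 := by
            rw [show -(3:ℝ)/2 + 1 = -(1/2 : ℝ) by norm_num, Real.rpow_neg (by norm_num),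
              ← Real.sqrt_eq_rpow, show (1/4:ℝ) = (1/2)^2 by norm_num,
              Real.sqrt_sq (by norm_num)]
            norm_num
          rw [h14]
          norm_num
  calc (∫⁻ t in Set.Ioc (0:ℝ) (1/4), muP 3 {y | t < h y})
        + ∫⁻ t in Set.Ioi (1/4:ℝ), muP 3 {y | t < h y}
      ≤ ENNReal.ofReal (1/4) + ENNReal.ofReal (1/2) := add_le_add piece1 piece2
    _ = ENNReal.ofReal (3/4) := by rw [← ENNReal.ofReal_add] <;> norm_num
theorem hydro_upper_bound (d : ℕ) (hd : 3 ≤ d) :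
    (∫ x in (Set.univ.pi fun _ : Fin d => Set.Icc (0 : ℝ) 1),
        (2 * d - 2 * ∑ i, Real.cos (2 * π * x i))⁻¹) ≤ 4 / d := by
  haveI : NeZero d := ⟨by omega⟩
  have hdpos : (0:ℝ) < d := by positivity
  set f : (Fin d → ℝ) → ℝ := fun x => (2 * d - 2 * ∑ i, Real.cos (2 * π * x i))⁻¹ with hf
  have hden : ∀ x : Fin d → ℝ,
      2 * (d:ℝ) - 2 * ∑ i, Real.cos (2 * π * x i) = ∑ i, (2 - 2 * Real.cos (2 * π * x i)) := by
    intro x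
    rw [Finset.sum_sub_distrib, Finset.sum_const, Finset.card_univ, Fintype.card_fin,
      ← Finset.mul_sum]
    push_cast
    ring
  have hterm_nn : ∀ (u : ℝ), (0:ℝ) ≤ 2 - 2 * Real.cos u := fun u => by
    nlinarith [Real.cos_le_one u]
  have hnn : ∀ x, 0 ≤ f x := fun x => by
    rw [hf]
    simp only
    rw [hden x]
    exact inv_nonneg.mpr (Finset.sum_nonneg fun i _ => hterm_nn _)
  have hmeasf : Measurable f := by fun_prop
  -- ENNReal quantities
  set T : (Fin d → ℝ) → ℝ≥0∞ :=
    fun x => ∑ i : Fin d, ENNReal.ofReal (2 - 2 * Real.cos (2 * π * x i)) with hT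
  have hfT : ∀ x, ENNReal.ofReal (f x) ≤ (T x)⁻¹ := by
    intro x
    rw [hf]
    simp only
    rw [hden x]
    set r := ∑ i, (2 - 2 * Real.cos (2 * π * x i)) with hr
    have hrnn : 0 ≤ r := Finset.sum_nonneg fun i _ => hterm_nn _
    rcases eq_or_lt_of_le hrnn with heq | hpos
    · rw [← heq]
      simp
    · rw [ENNReal.ofReal_inv_of_pos hpos, hT, hr,
        ENNReal.ofReal_sum_of_nonneg fun i _ => hterm_nn _]
  -- the cyclic 3-subsets
  set e : Fin 3 → Fin d := Fin.castLE hd with he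
  set b : Fin d → (Fin d → ℝ) → ℝ≥0∞ :=
    fun i x => ∑ j : Fin 3, ENNReal.ofReal (2 - 2 * Real.cos (2 * π * x (i + e j))) with hb
  have hbne : ∀ i x, b i x ≠ ⊤ := fun i x =>
    (ENNReal.sum_lt_top.mpr fun j _ => ENNReal.ofReal_lt_top).ne
  have hsum3 : ∀ x, ∑ i : Fin d, b i x = 3 * T x := by
    intro x
    rw [hb]
    simp only
    rw [Finset.sum_comm]
    have : ∀ j : Fin 3, ∑ i : Fin d, ENNReal.ofReal (2 - 2 * Real.cos (2 * π * x (i + e j)))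
        = T x := by
      intro j
      exact Fintype.sum_equiv (Equiv.addRight (e j)) _ _ (fun i => rfl)
    rw [Finset.sum_congr rfl fun j _ => this j, Finset.sum_const, Finset.card_univ,
      Fintype.card_fin]
    simp [mul_comm]
  have hpoint : ∀ x, (T x)⁻¹ ≤ 3 * ((d:ℝ≥0∞)^2)⁻¹ * ∑ i : Fin d, (b i x)⁻¹ := by
    intro x
    have hAM := amhm Finset.univ (fun i => b i x) (fun i _ => hbne i x)
    rw [Finset.card_univ, Fintype.card_fin, hsum3 x] at hAM
    have hd2 : ((d:ℝ≥0∞)^2) ≠ 0 := pow_ne_zero _ (Nat.cast_ne_zero.mpr (by omega))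
    have hd2' : ((d:ℝ≥0∞)^2) ≠ ⊤ := ENNReal.pow_ne_top (ENNReal.natCast_ne_top d)
    have h1 : (3 * T x)⁻¹ ≤ ((d:ℝ≥0∞)^2)⁻¹ * ∑ i : Fin d, (b i x)⁻¹ := by
      calc (3 * T x)⁻¹ = ((d:ℝ≥0∞)^2)⁻¹ * ((d:ℝ≥0∞)^2 * (3 * T x)⁻¹) := by
            rw [← mul_assoc, ENNReal.inv_mul_cancel hd2 hd2', one_mul]
        _ ≤ ((d:ℝ≥0∞)^2)⁻¹ * ∑ i : Fin d, (b i x)⁻¹ := mul_le_mul_right hAM _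
    have h2 : (T x)⁻¹ = 3 * (3 * T x)⁻¹ := by
      rw [ENNReal.mul_inv (Or.inl (by norm_num)) (Or.inl (by norm_num)), ← mul_assoc,
        ENNReal.mul_inv_cancel (by norm_num) (by norm_num), one_mul]
    rw [h2, mul_assoc]
    exact mul_le_mul_right h1 _
  -- reduce each subset integral to dimension 3
  have hred : ∀ i : Fin d, ∫⁻ x, (b i x)⁻¹ ∂(muP d)
      = ∫⁻ y, (∑ j : Fin 3, ENNReal.ofReal (2 - 2*Real.cos (2*π*(y j))))⁻¹ ∂(muP 3) := by
    intro i
    have hginj : Function.Injective (fun j : Fin 3 => i + e j) := by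
      intro a c h
      simp only at h
      have := add_left_cancel h
      exact Fin.castLE_injective hd this
    have hFmeas : Measurable fun y : Fin 3 → ℝ =>
        (∑ j : Fin 3, ENNReal.ofReal (2 - 2*Real.cos (2*π*(y j))))⁻¹ := by fun_prop
    have hPhimeas : Measurable fun (x : Fin d → ℝ) (j : Fin 3) => x (i + e j) :=
      measurable_pi_lambda _ fun j => measurable_pi_apply _
    rw [← map_pi (fun j : Fin 3 => i + e j) hginj, lintegral_map hFmeas hPhimeas]
  -- main lintegral bound
  have hkey : ∫⁻ x, ENNReal.ofReal (f x) ∂(muP d) ≤ ENNReal.ofReal (4 / d) := by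
    have c_ne_top : (3:ℝ≥0∞) * ((d:ℝ≥0∞)^2)⁻¹ ≠ ⊤ := by
      exact ENNReal.mul_ne_top (by norm_num)
        (ENNReal.inv_ne_top.mpr (pow_ne_zero _ (Nat.cast_ne_zero.mpr (by omega))))
    calc ∫⁻ x, ENNReal.ofReal (f x) ∂(muP d)
        ≤ ∫⁻ x, 3 * ((d:ℝ≥0∞)^2)⁻¹ * ∑ i : Fin d, (b i x)⁻¹ ∂(muP d) :=
          lintegral_mono fun x => (hfT x).trans (hpoint x)
      _ = 3 * ((d:ℝ≥0∞)^2)⁻¹ * ∫⁻ x, ∑ i : Fin d, (b i x)⁻¹ ∂(muP d) :=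
          lintegral_const_mul' _ _ c_ne_top
      _ = 3 * ((d:ℝ≥0∞)^2)⁻¹ * ∑ i : Fin d, ∫⁻ x, (b i x)⁻¹ ∂(muP d) := by
          rw [lintegral_finset_sum _ fun i _ => by fun_prop]
      _ ≤ 3 * ((d:ℝ≥0∞)^2)⁻¹ * ∑ _i : Fin d, ENNReal.ofReal (3/4) := by
          refine mul_le_mul_right (Finset.sum_le_sum fun i _ => ?_) _
          rw [hred i]
          exact key3
      _ = 3 * ((d:ℝ≥0∞)^2)⁻¹ * ((d:ℝ≥0∞) * ENNReal.ofReal (3/4)) := by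
          rw [Finset.sum_const, Finset.card_univ, Fintype.card_fin]
          simp [mul_comm]
      _ ≤ ENNReal.ofReal (4 / d) := by
          have hdinv : ((d:ℝ≥0∞)^2)⁻¹ * (d:ℝ≥0∞) = (d:ℝ≥0∞)⁻¹ := by
            rw [pow_two, ENNReal.mul_inv (Or.inl (by exact_mod_cast (by omega : d ≠ 0)))
              (Or.inl (ENNReal.natCast_ne_top d)), mul_assoc,
              ENNReal.inv_mul_cancel (by exact_mod_cast (by omega : d ≠ 0))
                (ENNReal.natCast_ne_top d), mul_one]
          have : (3:ℝ≥0∞) * ((d:ℝ≥0∞)^2)⁻¹ * ((d:ℝ≥0∞) * ENNReal.ofReal (3/4))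
              = 3 * ENNReal.ofReal (3/4) * (d:ℝ≥0∞)⁻¹ := by
            rw [mul_assoc, ← mul_assoc ((d:ℝ≥0∞)^2)⁻¹, hdinv]
            ring
          rw [this]
          have h3 : (3:ℝ≥0∞) * ENNReal.ofReal (3/4) = ENNReal.ofReal (9/4) := by
            rw [show (3:ℝ≥0∞) = ENNReal.ofReal 3 by norm_num,
              ← ENNReal.ofReal_mul (by norm_num)]
            norm_num
          have hdi : (d:ℝ≥0∞)⁻¹ = ENNReal.ofReal ((d:ℝ)⁻¹) := by
            rw [← ENNReal.ofReal_natCast d, ENNReal.ofReal_inv_of_pos hdpos]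
          rw [h3, hdi, ← ENNReal.ofReal_mul (by norm_num)]
          refine ENNReal.ofReal_le_ofReal ?_
          calc (9/4:ℝ) * (d:ℝ)⁻¹ ≤ 4 * (d:ℝ)⁻¹ := by gcongr; norm_num
            _ = 4 / d := (div_eq_mul_inv 4 _).symm
  -- conclude
  rw [cube_restrict d] at *
  rw [integral_eq_lintegral_of_nonneg_ae (ae_of_all _ hnn) hmeasf.aestronglyMeasurable]
  calc (∫⁻ x, ENNReal.ofReal (f x) ∂(muP d)).toReal
      ≤ (ENNReal.ofReal (4 / d)).toReal :=
        ENNReal.toReal_mono ENNReal.ofReal_ne_top hkey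
    _ = 4 / d := ENNReal.toReal_ofReal (by positivity)
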